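/- Let n, k, j be natural numbers with k ≥ 1, 2 ≤ j, and 2j ≤ n − k. Then (j+k−1)^{2j} · (n−j−1)^{2(n−k−j)} < (j+k−2)^{2(j−1)} · (n−j)^{2(n−k−j+1)}. -/

import Mathlib

/-- Bernoulli-type inequality in ℕ: `(N+1)^p * (N+1-p) ≤ N^p * (N+1)`. -/
lemma bern_aux (N p : ℕ) : (N+1)^p * (N+1-p) ≤ N^p * (N+1) := by
  induction p with
  | zero => simp
  | succ p ih =>
    rcases le_or_gt (N+1) (p+1) with h | h
    · have : N+1-(p+1) = 0 := by omega
      simp [this]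
    · have hpn : p ≤ N := by omega
      have h1 : (N+1)^(p+1) * (N+1-(p+1)) = (N+1)^p * ((N+1) * (N-p)) := by
        have : N+1-(p+1) = N - p := by omega
        rw [this]; ring
      have h2 : (N+1) * (N - p) ≤ N * (N + 1 - p) := by
        have hN : N + 1 - p = N - p + 1 := by omega
        rw [hN]
        nlinarith [Nat.sub_le N p]
      calc (N+1)^(p+1) * (N+1-(p+1)) = (N+1)^p * ((N+1) * (N-p)) := h1
        _ ≤ (N+1)^p * (N * (N+1-p)) := Nat.mul_le_mul_left _ h2
        _ = N * ((N+1)^p * (N+1-p)) := by ring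
        _ ≤ N * (N^p * (N+1)) := Nat.mul_le_mul_left _ ih
        _ = N^(p+1) * (N+1) := by ring

/-- Core three-term inequality: for `1 ≤ x`, `p ≤ x`,
`(x+1)^(2p+2) < x^p * (x+2)^(p+2)`. -/
lemma core_aux (x p : ℕ) (hx : 1 ≤ x) (hp : p ≤ x) :
    (x+1)^(2*p+2) < x^p * (x+2)^(p+2) := by
  set N := x * (x + 2) with hN
  have hNe : N = x*x + 2*x := by rw [hN]; ring
  have hsq : (x+1)^2 = N + 1 := by rw [hN]; ring
  have hL : (x+1)^(2*p+2) = (N+1)^(p+1) := by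
    rw [show 2*p+2 = 2*(p+1) by ring, pow_mul, hsq]
  have hR : x^p * (x+2)^(p+2) = N^p * (x+2)^2 := by
    rw [pow_add, ← mul_assoc, ← mul_pow, hN]
  rw [hL, hR]
  have hpos : 0 < N + 1 - p := by omega
  have hb := bern_aux N p
  have h1 : (N+1)^(p+1) * (N+1-p) ≤ (N+1) * (N^p * (N+1)) := by
    calc (N+1)^(p+1) * (N+1-p) = (N+1) * ((N+1)^p * (N+1-p)) := by ring
      _ ≤ (N+1) * (N^p * (N+1)) := Nat.mul_le_mul_left _ hb
  have h2 : (N+1) * (N+1) < (x+2)^2 * (N+1-p) := by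
    have hge : x*x + x + 1 ≤ N + 1 - p := by omega
    have hpoly : (N+1) * (N+1) < (x+2)^2 * (x*x + x + 1) := by
      rw [hNe]; nlinarith
    calc (N+1) * (N+1) < (x+2)^2 * (x*x+x+1) := hpoly
      _ ≤ (x+2)^2 * (N+1-p) := Nat.mul_le_mul_left _ hge
  have hNpos : 0 < N ^ p := Nat.pow_pos (by omega)
  have h3 : (N+1)^(p+1) * (N+1-p) < N^p * (x+2)^2 * (N+1-p) := by
    calc (N+1)^(p+1) * (N+1-p) ≤ (N+1) * (N^p * (N+1)) := h1
      _ = N^p * ((N+1)*(N+1)) := by ring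
      _ < N^p * ((x+2)^2 * (N+1-p)) := mul_lt_mul_of_pos_left h2 hNpos
      _ = N^p * (x+2)^2 * (N+1-p) := by ring
  exact Nat.lt_of_mul_lt_mul_right h3

/-- Chain lemma: for `1 ≤ t ≤ s`, `d ≥ 0`,
`(s+1)^(t+1) * (s+d+1)^(t+d+1) < s^t * (s+d+2)^(t+d+2)`. -/
lemma chain_aux (s t d : ℕ) (ht : 1 ≤ t) (hst : t ≤ s) :
    (s+1)^(t+1) * (s+d+1)^(t+d+1) < s^t * (s+d+2)^(t+d+2) := by
  induction d with
  | zero =>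
    have h := core_aux s t (le_trans ht hst) hst
    calc (s+1)^(t+1) * (s+0+1)^(t+0+1) = (s+1)^(2*t+2) := by
          show (s+1)^(t+1) * (s+1)^(t+1) = (s+1)^(2*t+2)
          rw [← pow_add]; congr 1; ring
      _ < s^t * (s+2)^(t+2) := h
      _ = s^t * (s+0+2)^(t+0+2) := rfl
  | succ d ih =>
    have hcore := core_aux (s+d+1) (t+d+1) (by omega) (by omega)
    set A := (s+1)^(t+1) with hA
    set B := (s+d+1)^(t+d+1) with hB
    set C := s^t with hC
    set D := (s+d+2)^(t+d+2) with hD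
    set E := (s+d+3)^(t+d+3) with hE
    have hcore' : D * D < B * E := by
      have e1 : D * D = (s+d+1+1)^(2*(t+d+1)+2) := by
        rw [hD, ← pow_add, show s+d+1+1 = s+d+2 by ring,
          show 2*(t+d+1)+2 = t+d+2+(t+d+2) by ring]
      have e2 : B * E = (s+d+1)^(t+d+1) * (s+d+1+2)^(t+d+1+2) := by
        rw [hB, hE, show s+d+1+2 = s+d+3 by ring, show t+d+1+2 = t+d+3 by ring]
      rw [e1, e2]; exact hcore
    have hApos : 0 < A := Nat.pow_pos (by omega)
    have hDpos : 0 < D := Nat.pow_pos (by omega)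
    have hEpos : 0 < E := Nat.pow_pos (by omega)
    have step : (A * D) * D < (C * E) * D := by
      calc (A * D) * D = A * (D * D) := by ring
        _ < A * (B * E) := mul_lt_mul_of_pos_left hcore' hApos
        _ = (A * B) * E := by ring
        _ < (C * D) * E := mul_lt_mul_of_pos_right ih hEpos
        _ = (C * E) * D := by ring
    have goal' : A * D < C * E := Nat.lt_of_mul_lt_mul_right step
    calc (s+1)^(t+1) * (s+(d+1)+1)^(t+(d+1)+1) = A * D := by
          rw [hA, hD, show s+(d+1)+1 = s+d+2 by ring, show t+(d+1)+1 = t+d+2 by ring]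
      _ < C * E := goal'
      _ = s^t * (s+(d+1)+2)^(t+(d+1)+2) := by
          rw [hC, hE, show s+(d+1)+2 = s+d+3 by ring, show t+(d+1)+2 = t+d+3 by ring]

/-- The key numerical inequality in Lemma 3 (Wang): if `k ≥ 1`, `2 ≤ j` and
`2j ≤ n - k`, then
`(j+k-1)^(2j) * (n-j-1)^(2(n-k-j)) < (j+k-2)^(2(j-1)) * (n-j)^(2(n-k-j+1))`. -/
theorem zagreb_key_nat_ineq (n k j : ℕ) (hk : 1 ≤ k) (hj : 2 ≤ j)
    (hjn : 2 * j ≤ n - k) :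
    (j + k - 1) ^ (2 * j) * (n - j - 1) ^ (2 * (n - k - j)) <
      (j + k - 2) ^ (2 * (j - 1)) * (n - j) ^ (2 * (n - k - j + 1)) := by
  set s := j + k - 2 with hs
  set t := j - 1 with ht
  set m := n - k - j with hm
  have hmj : j ≤ m := by omega
  set d := m - j with hd
  have e1 : j + k - 1 = s + 1 := by omega
  have e2 : n - j - 1 = s + d + 1 := by omega
  have e3 : n - j = s + d + 2 := by omega
  have e4 : j = t + 1 := by omega
  have e5 : m = t + d + 1 := by omega
  have e6 : m + 1 = t + d + 2 := by omega
  have key := chain_aux s t d (by omega) (by omega)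
  calc (j + k - 1) ^ (2 * j) * (n - j - 1) ^ (2 * m)
      = ((s+1)^(t+1) * (s+d+1)^(t+d+1))^2 := by
        rw [e1, e2, e4, e5, mul_pow, ← pow_mul, ← pow_mul]
        ring_nf
    _ < (s^t * (s+d+2)^(t+d+2))^2 := Nat.pow_lt_pow_left key (by norm_num)
    _ = (j + k - 2) ^ (2 * (j - 1)) * (n - j) ^ (2 * (m + 1)) := by
        rw [e3, ← hs, ← ht, e6, mul_pow, ← pow_mul, ← pow_mul]
        ring_nf
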